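/- For θ ∈ [0, π/4], let t_θ be an intersection point of the level sets {a : Re f_{1,θ}(a) = 0} and {a : Re f_{-1,θ}(a) = 0} lying in the closed upper half-plane with -1 ≤ Re t_θ. Then Re t_θ ≤ 0. Equivalently: if a satisfies Im a > 0, Re a > 0, Re f_{1,θ}(a) = 0 and Re f_{-1,θ}(a) = 0, then 0 < arg ∫_{-1}^{1} e^{iθ}√(p_a(t)) dt < π/2, so a does not lie on Σ_θ, contradicting the closed-curve structure; hence no such intersection has positive real part. -/

import Mathlib

open Complex Set intervalIntegral

noncomputable section

/-- `p_a(z) = (z - a)(z² - 1)`. -/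
def pa (a z : ℂ) : ℂ := (z - a) * (z ^ 2 - 1)

/-- `q` is a continuous branch of `√(p_a)` along the straight segment `[e, a]`. -/
def SegBranch (a e : ℂ) (q : ℝ → ℂ) : Prop :=
  ContinuousOn q (Icc (0:ℝ) 1) ∧
    ∀ t ∈ Icc (0:ℝ) 1, (q t) ^ 2 = pa a (e + (t : ℂ) * (a - e))

/-- `Re f_{e,θ}(a) = Re (e^{iθ} ∫_{[e,a]} √(p_a)) = 0`. -/
def OnLevel (θ : ℝ) (a e : ℂ) : Prop :=
  ∃ q : ℝ → ℂ, SegBranch a e q ∧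
    (Complex.exp (Complex.I * θ) * ((a - e) * ∫ t in (0:ℝ)..1, q t)).re = 0

/-- `∫_{-1}^1 √(p_a(t)) dt = ∫₀¹ √(1-t²)(√(a-t)+√(a+t)) dt` with principal square
roots, valid for `Im a > 0`. -/
def I16 (a : ℂ) : ℂ :=
  ∫ t in (0:ℝ)..1, (Real.sqrt (1 - t ^ 2) : ℂ) *
    ((a - t) ^ ((1:ℂ)/2) + (a + t) ^ ((1:ℂ)/2))

namespace Stmt16Aux

/-- Re/Im of the principal square root via exp/log. -/
lemma cpow_half_re_im (z : ℂ) (hz : z ≠ 0) :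
    (z ^ ((1:ℂ)/2)).re = Real.exp (Real.log ‖z‖ / 2) * Real.cos (z.arg / 2) ∧
    (z ^ ((1:ℂ)/2)).im = Real.exp (Real.log ‖z‖ / 2) * Real.sin (z.arg / 2) := by
  rw [Complex.cpow_def_of_ne_zero hz]
  rw [Complex.exp_re, Complex.exp_im]
  constructor <;> congr 1 <;> [skip; congr 1; skip; congr 1] <;>
    simp [Complex.log_re, Complex.log_im, Complex.mul_re, Complex.mul_im] <;> ring

end Stmt16Aux
namespace Stmt16Aux

lemma arg_mem (z : ℂ) (hz : 0 < z.im) : 0 < z.arg ∧ z.arg < Real.pi := by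
  constructor
  · rcases lt_or_eq_of_le (Complex.arg_nonneg_iff.mpr hz.le) with h | h
    · exact h
    · exfalso
      rw [eq_comm, Complex.arg_eq_zero_iff] at h
      linarith [h.2]
  · rcases lt_or_eq_of_le (Complex.arg_le_pi z) with h | h
    · exact h
    · exfalso
      rw [Complex.arg_eq_pi_iff] at h
      linarith [h.2]

/-- The key pointwise estimate: for `Im a > 0`, `Re a > 0`, `0 < t`, the sum of
principal square roots `√(a-t)+√(a+t)` has `0 < Im < Re`. -/
lemma key_sum (a : ℂ) (ha : 0 < a.im) (ha' : 0 < a.re) (t : ℝ) (ht0 : 0 < t) :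
    0 < ((a - t) ^ ((1:ℂ)/2) + (a + t) ^ ((1:ℂ)/2)).im ∧
    ((a - t) ^ ((1:ℂ)/2) + (a + t) ^ ((1:ℂ)/2)).im <
      ((a - t) ^ ((1:ℂ)/2) + (a + t) ^ ((1:ℂ)/2)).re := by
  set z1 : ℂ := a - t with hz1def
  set z2 : ℂ := a + t with hz2def
  have hz1im : z1.im = a.im := by simp [hz1def]
  have hz2im : z2.im = a.im := by simp [hz2def]
  have hz1re : z1.re = a.re - t := by simp [hz1def]
  have hz2re : z2.re = a.re + t := by simp [hz2def]
  have hz1pos : 0 < z1.im := by rw [hz1im]; exact ha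
  have hz2pos : 0 < z2.im := by rw [hz2im]; exact ha
  have hz1ne : z1 ≠ 0 := fun h => by simp [h] at hz1pos
  have hz2ne : z2 ≠ 0 := fun h => by simp [h] at hz2pos
  obtain ⟨hα0, hαπ⟩ := arg_mem z1 hz1pos
  obtain ⟨hβ0, hβπ⟩ := arg_mem z2 hz2pos
  have hβhalf : z2.arg < Real.pi / 2 :=
    Complex.arg_lt_pi_div_two_iff.mpr (Or.inl (by rw [hz2re]; linarith))
  -- `arg z1 + arg z2 < π`
  have hsum : z1.arg + z2.arg < Real.pi := by
    by_contra hc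
    push_neg at hc
    have habs1 : 0 < ‖z1‖ := norm_pos_iff.mpr hz1ne
    have habs2 : 0 < ‖z2‖ := norm_pos_iff.mpr hz2ne
    have hsin : Real.sin (z1.arg + z2.arg) =
        (z1.im * z2.re + z1.re * z2.im) / (‖z1‖ * ‖z2‖) := by
      rw [Real.sin_add, Complex.sin_arg, Complex.sin_arg, Complex.cos_arg hz1ne,
        Complex.cos_arg hz2ne]
      field_simp
    have him : z1.im * z2.re + z1.re * z2.im = 2 * a.re * a.im := by
      rw [hz1im, hz2im, hz1re, hz2re]; ring
    have hpos : 0 < Real.sin (z1.arg + z2.arg) := by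
      rw [hsin, him]
      positivity
    have hnonpos : Real.sin (z1.arg + z2.arg) ≤ 0 := by
      have : Real.sin (z1.arg + z2.arg) = -Real.sin (z1.arg + z2.arg - Real.pi) := by
        rw [Real.sin_sub_pi, neg_neg]
      rw [this, neg_nonpos]
      apply Real.sin_nonneg_of_nonneg_of_le_pi <;> linarith [Complex.arg_le_pi z1]
    linarith
  set φ1 := z1.arg / 2 with hφ1
  set φ2 := z2.arg / 2 with hφ2
  have hc1s2 : Real.sin φ2 < Real.cos φ1 := by
    rw [← Real.cos_pi_div_two_sub]
    apply Real.cos_lt_cos_of_nonneg_of_le_pi (by positivity) (by rw [hφ2]; linarith)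
    rw [hφ1, hφ2]; linarith
  have hc2s1 : Real.sin φ1 < Real.cos φ2 := by
    rw [← Real.cos_pi_div_two_sub]
    apply Real.cos_lt_cos_of_nonneg_of_le_pi (by positivity) (by rw [hφ1]; linarith)
    rw [hφ1, hφ2]; linarith
  have hc2s2 : Real.sin φ2 < Real.cos φ2 := by
    rw [← Real.cos_pi_div_two_sub]
    apply Real.cos_lt_cos_of_nonneg_of_le_pi (by positivity) (by rw [hφ2]; linarith)
    rw [hφ2]; linarith
  have hs1pos : 0 < Real.sin φ1 := Real.sin_pos_of_pos_of_lt_pi (by positivity) (by rw [hφ1]; linarith)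
  have hs2pos : 0 < Real.sin φ2 := Real.sin_pos_of_pos_of_lt_pi (by positivity) (by rw [hφ2]; linarith)
  -- radii
  set r1 := Real.exp (Real.log ‖z1‖ / 2) with hr1
  set r2 := Real.exp (Real.log ‖z2‖ / 2) with hr2
  have hr1pos : 0 < r1 := Real.exp_pos _
  have hr2pos : 0 < r2 := Real.exp_pos _
  have hr12 : r1 ≤ r2 := by
    apply Real.exp_le_exp.mpr
    have habs : ‖z1‖ ≤ ‖z2‖ := by
      rw [Complex.norm_def, Complex.norm_def]
      apply Real.sqrt_le_sqrt
      rw [Complex.normSq_apply, Complex.normSq_apply, hz1re, hz2re, hz1im, hz2im]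
      nlinarith
    have := Real.log_le_log (norm_pos_iff.mpr hz1ne) habs
    linarith
  obtain ⟨h1re, h1im⟩ := cpow_half_re_im z1 hz1ne
  obtain ⟨h2re, h2im⟩ := cpow_half_re_im z2 hz2ne
  rw [Complex.add_im, Complex.add_re, h1re, h1im, h2re, h2im, ← hr1, ← hr2, ← hφ1, ← hφ2]
  constructor
  · positivity
  · nlinarith [mul_nonneg (sub_nonneg.mpr hr12) (sub_pos.mpr hc2s2).le]

end Stmt16Aux
namespace Stmt16Aux

lemma w_cont (a : ℂ) (ha : 0 < a.im) :
    Continuous (fun t : ℝ => (Real.sqrt (1 - t ^ 2) : ℂ) *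
      ((a - t) ^ ((1:ℂ)/2) + (a + t) ^ ((1:ℂ)/2))) := by
  have h1 : Continuous (fun t : ℝ => ((a - t) ^ ((1:ℂ)/2) : ℂ)) := by
    rw [continuous_iff_continuousAt]
    intro t
    exact (continuousAt_cpow_const
      (Complex.mem_slitPlane_iff.mpr (Or.inr (by simp [ne_of_gt ha])))).comp
      ((continuous_const.sub Complex.continuous_ofReal).continuousAt)
  have h2 : Continuous (fun t : ℝ => ((a + t) ^ ((1:ℂ)/2) : ℂ)) := by
    rw [continuous_iff_continuousAt]
    intro t
    exact (continuousAt_cpow_const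
      (Complex.mem_slitPlane_iff.mpr (Or.inr (by simp [ne_of_gt ha])))).comp
      ((continuous_const.add Complex.continuous_ofReal).continuousAt)
  exact (Complex.continuous_ofReal.comp
    ((continuous_const.sub (continuous_pow 2)).sqrt)).mul (h1.add h2)

lemma I16_re_im (a : ℂ) (ha : 0 < a.im) (ha' : 0 < a.re) :
    0 < (I16 a).im ∧ (I16 a).im < (I16 a).re := by
  set w : ℝ → ℂ := fun t : ℝ => (Real.sqrt (1 - t ^ 2) : ℂ) *
      ((a - t) ^ ((1:ℂ)/2) + (a + t) ^ ((1:ℂ)/2)) with hw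
  have hwc := w_cont a ha
  have hint : IntervalIntegrable w MeasureTheory.volume 0 1 := hwc.intervalIntegrable 0 1
  have hre : (I16 a).re = ∫ t in (0:ℝ)..1, (w t).re := by
    rw [I16, ← hw]
    exact (ContinuousLinearMap.intervalIntegral_comp_comm Complex.reCLM hint).symm
  have him : (I16 a).im = ∫ t in (0:ℝ)..1, (w t).im := by
    rw [I16, ← hw]
    exact (ContinuousLinearMap.intervalIntegral_comp_comm Complex.imCLM hint).symm
  have hwre : Continuous fun t => (w t).re := Complex.continuous_re.comp hwc
  have hwim : Continuous fun t => (w t).im := Complex.continuous_im.comp hwc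
  have hkey : ∀ t ∈ Ioo (0:ℝ) 1, 0 < (w t).im ∧ (w t).im < (w t).re := by
    intro t ht
    obtain ⟨h1, h2⟩ := key_sum a ha ha' t ht.1
    have hsq : 0 < Real.sqrt (1 - t ^ 2) := Real.sqrt_pos.mpr (by nlinarith [ht.1, ht.2])
    rw [hw]
    simp only [Complex.re_ofReal_mul, Complex.im_ofReal_mul]
    constructor
    · positivity
    · exact (mul_lt_mul_iff_right₀ hsq).mpr h2
  constructor
  · rw [him]
    apply intervalIntegral_pos_of_pos_on (hwim.intervalIntegrable 0 1)
      (fun t ht => (hkey t ht).1) one_pos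
  · have : 0 < ∫ t in (0:ℝ)..1, ((w t).re - (w t).im) := by
      apply intervalIntegral_pos_of_pos_on ((hwre.sub hwim).intervalIntegrable 0 1)
        (fun t ht => sub_pos.mpr (hkey t ht).2) one_pos
    rw [intervalIntegral.integral_sub (hwre.intervalIntegrable 0 1)
      (hwim.intervalIntegrable 0 1)] at this
    rw [hre, him]
    linarith

end Stmt16Aux
namespace Stmt16Aux

lemma final (θ : ℝ) (hθ : θ ∈ Icc (0:ℝ) (Real.pi / 4)) (a : ℂ)
    (ha : 0 < a.im) (ha' : 0 < a.re) :
    0 < (Complex.exp (Complex.I * θ) * I16 a).re ∧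
    0 < (Complex.exp (Complex.I * θ) * I16 a).im := by
  obtain ⟨hI1, hI2⟩ := I16_re_im a ha ha'
  have hpi := Real.pi_pos
  obtain ⟨hθ0, hθ1⟩ := hθ
  have hcos : 0 < Real.cos θ := Real.cos_pos_of_mem_Ioo ⟨by linarith, by linarith⟩
  have hsin : 0 ≤ Real.sin θ := Real.sin_nonneg_of_nonneg_of_le_pi hθ0 (by linarith)
  have hsc : Real.sin θ ≤ Real.cos θ := by
    rw [← Real.cos_pi_div_two_sub]
    exact Real.cos_le_cos_of_nonneg_of_le_pi hθ0 (by linarith) (by linarith)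
  have hexpre : (Complex.exp (Complex.I * θ)).re = Real.cos θ := by
    rw [mul_comm, Complex.exp_ofReal_mul_I_re]
  have hexpim : (Complex.exp (Complex.I * θ)).im = Real.sin θ := by
    rw [mul_comm, Complex.exp_ofReal_mul_I_im]
  rw [Complex.mul_re, Complex.mul_im, hexpre, hexpim]
  constructor
  · nlinarith
  · nlinarith

end Stmt16Aux

theorem stmt16_aux_main (θ : ℝ) (hθ : θ ∈ Icc (0:ℝ) (Real.pi / 4)) (a : ℂ)
    (ha : 0 < a.im) :
    (0 < a.re →
      0 < (Complex.exp (Complex.I * θ) * I16 a).arg ∧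
      (Complex.exp (Complex.I * θ) * I16 a).arg < Real.pi / 2 ∧
      (Complex.exp (Complex.I * θ) * I16 a).re ≠ 0) ∧
    ((Complex.exp (Complex.I * θ) * I16 a).re = 0 → a.re ≤ 0) := by
  have main : 0 < a.re →
      0 < (Complex.exp (Complex.I * θ) * I16 a).arg ∧
      (Complex.exp (Complex.I * θ) * I16 a).arg < Real.pi / 2 ∧
      (Complex.exp (Complex.I * θ) * I16 a).re ≠ 0 := by
    intro ha'
    obtain ⟨hre, him⟩ := Stmt16Aux.final θ hθ a ha ha'
    refine ⟨?_, Complex.arg_lt_pi_div_two_iff.mpr (Or.inl hre), ne_of_gt hre⟩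
    rcases lt_or_eq_of_le (Complex.arg_nonneg_iff.mpr him.le) with h | h
    · exact h
    · exfalso
      rw [eq_comm, Complex.arg_eq_zero_iff] at h
      linarith [h.2]
  refine ⟨main, fun h => ?_⟩
  by_contra hc
  push_neg at hc
  exact (main hc).2.2 h

theorem stmt16 (θ : ℝ) (hθ : θ ∈ Icc (0:ℝ) (Real.pi / 4)) (a : ℂ)
    (ha : 0 < a.im) (h1 : OnLevel θ a 1) (hm1 : OnLevel θ a (-1)) :
    -- if moreover `Re a > 0` then `0 < arg(e^{iθ}∫_{-1}^1 √(p_a)) < π/2`,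
    -- hence `a ∉ Σ_θ`
    (0 < a.re →
      0 < (Complex.exp (Complex.I * θ) * I16 a).arg ∧
      (Complex.exp (Complex.I * θ) * I16 a).arg < Real.pi / 2 ∧
      (Complex.exp (Complex.I * θ) * I16 a).re ≠ 0) ∧
    -- so an intersection point `t_θ` lying also on `Σ_θ` has `Re t_θ ≤ 0`
    ((Complex.exp (Complex.I * θ) * I16 a).re = 0 → a.re ≤ 0) := by
  exact stmt16_aux_main θ hθ a ha
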